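/- Let κ = 3, let (X_t)_{t≥0} be a 3-color FCA trajectory on ℤ, and suppose no edge flips at any time t ≥ t_0, where t_0 ≥ 0. Then for every integer t ≥ 1: M_{t_0}(t − 1) ≤ ne_{3t + t_0}(0) ≤ M_{t_0}(t). -/

import Mathlib

noncomputable section

namespace FCA

/-- The blinking color `b(κ) = ⌊(κ-1)/2⌋`. -/
def blink (κ : ℕ) : ℕ := (κ - 1) / 2

/-- One step of the κ-color firefly cellular automaton on ℤ. -/
def step (κ : ℕ) (X : ℤ → ZMod κ) : ℤ → ZMod κ := fun x =>
  if (X x).val > blink κ ∧ ((X (x - 1)).val = blink κ ∨ (X (x + 1)).val = blink κ)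
  then X x else X x + 1

/-- The FCA trajectory started from `X0`. -/
def traj (κ : ℕ) (X0 : ℤ → ZMod κ) : ℕ → ℤ → ZMod κ
  | 0 => X0
  | t + 1 => step κ (traj κ X0 t)

/-- Site `x` is excited at time `t`: `X_{t+1}(x) = X_t(x)`. -/
def excited (κ : ℕ) (X0 : ℤ → ZMod κ) (t : ℕ) (x : ℤ) : Prop :=
  traj κ X0 (t + 1) x = traj κ X0 t x

/-- The number of excitations of site `x` before time `t`. -/
def ne' (κ : ℕ) (X0 : ℤ → ZMod κ) (t : ℕ) (x : ℤ) : ℕ :=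
  ((Finset.range t).filter fun s => traj κ X0 (s + 1) x = traj κ X0 s x).card

/-- The associated 1-form on the oriented edge `(x, x+1)`. -/
def dform (κ : ℕ) (X : ℤ → ZMod κ) (x : ℤ) : ℤ :=
  let d : ℕ := (X (x + 1) - X x).val
  if 2 * d < κ then (d : ℤ)
  else if κ < 2 * d then (d : ℤ) - (κ : ℤ)
  else if (X x).val ≤ blink κ then ((κ / 2 : ℕ) : ℤ) else -((κ / 2 : ℕ) : ℤ)

/-- The edge `(x, x+1)` flips at time `t`. -/
def flips (κ : ℕ) (X0 : ℤ → ZMod κ) (t : ℕ) (x : ℤ) : Prop :=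
  (0 < dform κ (traj κ X0 t) x ∧ dform κ (traj κ X0 (t + 1)) x < 0) ∨
  (dform κ (traj κ X0 t) x < 0 ∧ 0 < dform κ (traj κ X0 (t + 1)) x)

/-- Path integral of an edge function: `∫_x^y f = Σ_{i=x}^{y-1} f(i)` for `x ≤ y`,
and `∫_y^x f = -∫_x^y f`. -/
def pathInt (f : ℤ → ℤ) (x y : ℤ) : ℤ :=
  if x ≤ y then ∑ i ∈ Finset.Ico x y, f i else -∑ i ∈ Finset.Ico y x, f i

/-- The tournament expansion: `rk_t(0) = ne_t(0)` and `rk_t(x) = rk_t(0) - ∫_0^x dX_t`. -/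
def rk (κ : ℕ) (X0 : ℤ → ZMod κ) (t : ℕ) (x : ℤ) : ℤ :=
  (ne' κ X0 t 0 : ℤ) - pathInt (dform κ (traj κ X0 t)) 0 x

/-- `M_t(r)`: the maximum rank at time `t` among sites `x` with `|x| ≤ r`. -/
def maxRk (κ : ℕ) (X0 : ℤ → ZMod κ) (t : ℕ) (r : ℝ) : ℤ :=
  sSup (rk κ X0 t '' {x : ℤ | |(x : ℝ)| ≤ r})

end FCA

open FCA

namespace FCA3P

/-! ### Pure finite lemmas about the 3-color automaton -/

/-- The 1-form as a function of the two endpoint colors. -/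
def D (a b : ZMod 3) : ℤ :=
  if 2 * (b - a).val < 3 then ((b - a).val : ℤ) else ((b - a).val : ℤ) - 3

/-- The excitation condition for a site with left neighbor `l`, color `a`, right neighbor `r`. -/
def C (l a r : ZMod 3) : Prop := 1 < a.val ∧ (l.val = 1 ∨ r.val = 1)

instance (l a r : ZMod 3) : Decidable (C l a r) := inferInstanceAs (Decidable (_ ∧ _))

def CB (l a r : ZMod 3) : Bool := decide (C l a r)

/-- Next color given excitation bit. -/
def nxtB (e : Bool) (a : ZMod 3) : ZMod 3 := if e then a else a + 1

def flipP (u v : ℤ) : Prop := (0 < u ∧ v < 0) ∨ (u < 0 ∧ 0 < v)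

instance (u v : ℤ) : Decidable (flipP u v) := inferInstanceAs (Decidable (_ ∨ _))

lemma keyD : ∀ (a b : ZMod 3) (ea eb : Bool),
    (ea = true → a.val = 2) → (eb = true → b.val = 2) →
    ¬ flipP (D a b) (D (nxtB ea a) (nxtB eb b)) →
    D (nxtB ea a) (nxtB eb b) = D a b + (if ea then 1 else 0) - (if eb then 1 else 0) := by
  decide

set_option synthInstance.maxHeartbeats 1000000 in
set_option synthInstance.maxSize 5000 in
set_option maxHeartbeats 2000000 in
lemma keyE3 : ∀ (l a r : ZMod 3) (eL0 eR0 eL1 eR1 : Bool),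
    (eL0 = true → l.val = 2) → (l.val = 2 → a.val = 1 → eL0 = true) →
    (eR0 = true → r.val = 2) → (r.val = 2 → a.val = 1 → eR0 = true) →
    (eL1 = true → (nxtB eL0 l).val = 2) →
    ((nxtB eL0 l).val = 2 → (nxtB (CB l a r) a).val = 1 → eL1 = true) →
    (eR1 = true → (nxtB eR0 r).val = 2) →
    ((nxtB eR0 r).val = 2 → (nxtB (CB l a r) a).val = 1 → eR1 = true) →
    ¬ flipP (D l a) (D (nxtB eL0 l) (nxtB (CB l a r) a)) →
    ¬ flipP (D a r) (D (nxtB (CB l a r) a) (nxtB eR0 r)) →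
    ((if CB l a r then (1 : ℤ) else 0) +
      (if CB (nxtB eL0 l) (nxtB (CB l a r) a) (nxtB eR0 r) then 1 else 0) +
      (if CB (nxtB eL1 (nxtB eL0 l))
          (nxtB (CB (nxtB eL0 l) (nxtB (CB l a r) a) (nxtB eR0 r)) (nxtB (CB l a r) a))
          (nxtB eR1 (nxtB eR0 r)) then 1 else 0)) =
      (if (l = a + 2 ∨ r = a + 2) then 1 else 0) := by
  decide

lemma CB_val : ∀ l a r : ZMod 3, CB l a r = true → a.val = 2 := by decide

lemma CB_right : ∀ w l a : ZMod 3, l.val = 2 → a.val = 1 → CB w l a = true := by decide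

lemma CB_left : ∀ a r w : ZMod 3, r.val = 2 → a.val = 1 → CB a r w = true := by decide

lemma nxtB_eq_self : ∀ (a : ZMod 3) (e : Bool), nxtB e a = a ↔ e = true := by decide

lemma D_cases : ∀ a b : ZMod 3, D a b = -1 ∨ D a b = 0 ∨ D a b = 1 := by decide

lemma ahead_left : ∀ a b : ZMod 3, a = b + 2 ↔ D a b = 1 := by decide

lemma ahead_right : ∀ a b : ZMod 3, b = a + 2 ↔ D a b = -1 := by decide

/-! ### Basic translations -/

variable (X0 : ℤ → ZMod 3)

lemma dform_eq (X : ℤ → ZMod 3) (x : ℤ) : dform 3 X x = D (X x) (X (x + 1)) := by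
  have h : (X (x + 1) - X x).val < 3 := ZMod.val_lt _
  by_cases h1 : 2 * (X (x + 1) - X x).val < 3
  · simp [dform, D, h1]
  · have h2 : 3 < 2 * (X (x + 1) - X x).val := by omega
    simp [dform, D, h1, h2]

lemma step_eq (X : ℤ → ZMod 3) (x : ℤ) :
    step 3 X x = if C (X (x - 1)) (X x) (X (x + 1)) then X x else X x + 1 := rfl

lemma traj_succ (t : ℕ) (x : ℤ) :
    traj 3 X0 (t + 1) x =
      nxtB (CB (traj 3 X0 t (x - 1)) (traj 3 X0 t x) (traj 3 X0 t (x + 1))) (traj 3 X0 t x) := by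
  show step 3 (traj 3 X0 t) x = _
  rw [step_eq]
  by_cases h : C (traj 3 X0 t (x - 1)) (traj 3 X0 t x) (traj 3 X0 t (x + 1)) <;>
    simp [nxtB, CB, h]

/-- Excitation indicator as an integer. -/
def Ei (t : ℕ) (x : ℤ) : ℤ :=
  if CB (traj 3 X0 t (x - 1)) (traj 3 X0 t x) (traj 3 X0 t (x + 1)) then 1 else 0

lemma flips_iff (t : ℕ) (x : ℤ) : flips 3 X0 t x ↔
    flipP (D (traj 3 X0 t x) (traj 3 X0 t (x + 1)))
      (D (traj 3 X0 (t + 1) x) (traj 3 X0 (t + 1) (x + 1))) := by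
  simp only [flips, flipP, dform_eq]

lemma excited_iff (t : ℕ) (x : ℤ) : traj 3 X0 (t + 1) x = traj 3 X0 t x ↔
    CB (traj 3 X0 t (x - 1)) (traj 3 X0 t x) (traj 3 X0 t (x + 1)) = true := by
  rw [traj_succ]; exact nxtB_eq_self _ _

lemma dform_step (t : ℕ) (x : ℤ) (hnf : ¬ flips 3 X0 t x) :
    dform 3 (traj 3 X0 (t + 1)) x = dform 3 (traj 3 X0 t) x + Ei X0 t x - Ei X0 t (x + 1) := by
  have h1 := traj_succ X0 t x
  have h2 : traj 3 X0 (t + 1) (x + 1) =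
      nxtB (CB (traj 3 X0 t x) (traj 3 X0 t (x + 1)) (traj 3 X0 t (x + 2)))
        (traj 3 X0 t (x + 1)) := by
    have h := traj_succ X0 t (x + 1)
    rwa [show x + 1 - 1 = x from by ring, show x + 1 + 1 = x + 2 from by ring] at h
  rw [flips_iff, h1, h2] at hnf
  rw [dform_eq, dform_eq, h1, h2]
  simp only [Ei, show x + 1 - 1 = x from by ring, show x + 1 + 1 = x + 2 from by ring]
  exact keyD _ _ _ _ (CB_val _ _ _) (CB_val _ _ _) hnf

/-! ### Path integral and rank bookkeeping -/

lemma Ico_succ_self (x : ℤ) : Finset.Ico x (x + 1) = {x} := by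
  ext i
  simp only [Finset.mem_Ico, Finset.mem_singleton]
  omega

lemma sum_IcoZ (f : ℤ → ℤ) {a b c : ℤ} (h1 : a ≤ b) (h2 : b ≤ c) :
    (∑ i ∈ Finset.Ico a b, f i) + ∑ i ∈ Finset.Ico b c, f i = ∑ i ∈ Finset.Ico a c, f i := by
  rw [← Finset.sum_union (Finset.Ico_disjoint_Ico_consecutive a b c),
    Finset.Ico_union_Ico_eq_Ico h1 h2]

lemma pathInt_zero (f : ℤ → ℤ) : pathInt f 0 0 = 0 := by simp [pathInt]

lemma pathInt_succ (f : ℤ → ℤ) (x : ℤ) : pathInt f 0 (x + 1) = pathInt f 0 x + f x := by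
  unfold pathInt
  rcases lt_trichotomy x (-1) with h | h | h
  · rw [if_neg (by omega), if_neg (by omega)]
    have hc : (∑ i ∈ Finset.Ico x (x + 1), f i) + ∑ i ∈ Finset.Ico (x + 1) 0, f i
        = ∑ i ∈ Finset.Ico x 0, f i := sum_IcoZ f (by omega) (by omega)
    rw [Ico_succ_self, Finset.sum_singleton] at hc
    linarith
  · subst h
    rw [if_pos (by omega), if_neg (by omega)]
    have h1 : Finset.Ico (-1 : ℤ) 0 = {-1} := by
      rw [show (0 : ℤ) = -1 + 1 from by ring]; exact Ico_succ_self _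
    simp [h1]
  · rw [if_pos (by omega), if_pos (by omega)]
    have hc : (∑ i ∈ Finset.Ico (0 : ℤ) x, f i) + ∑ i ∈ Finset.Ico x (x + 1), f i
        = ∑ i ∈ Finset.Ico (0 : ℤ) (x + 1), f i := sum_IcoZ f (by omega) (by omega)
    rw [Ico_succ_self, Finset.sum_singleton] at hc
    linarith

lemma rk_zero (t : ℕ) : rk 3 X0 t 0 = (ne' 3 X0 t 0 : ℤ) := by
  unfold rk; rw [pathInt_zero]; ring

lemma rk_succ_x (t : ℕ) (x : ℤ) :
    rk 3 X0 t (x + 1) = rk 3 X0 t x - dform 3 (traj 3 X0 t) x := by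
  unfold rk; rw [pathInt_succ]; ring

lemma ne'_succ (t : ℕ) : (ne' 3 X0 (t + 1) 0 : ℤ) = (ne' 3 X0 t 0 : ℤ) + Ei X0 t 0 := by
  unfold ne' Ei
  rw [Finset.range_add_one, Finset.filter_insert]
  by_cases h : traj 3 X0 (t + 1) 0 = traj 3 X0 t 0
  · rw [excited_iff] at h
    rw [if_pos (by rw [excited_iff]; exact h), if_pos h,
      Finset.card_insert_of_notMem (by simp)]
    push_cast; ring
  · rw [excited_iff] at h
    rw [if_neg (by rw [excited_iff]; exact h), if_neg h]
    push_cast; ring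

lemma rk_succ (t : ℕ) (hnf : ∀ x : ℤ, ¬ flips 3 X0 t x) :
    ∀ x : ℤ, rk 3 X0 (t + 1) x = rk 3 X0 t x + Ei X0 t x := by
  intro x
  induction x using Int.induction_on with
  | zero => rw [rk_zero, rk_zero]; exact ne'_succ X0 t
  | succ i ih =>
    have hs1 := rk_succ_x X0 (t + 1) (i : ℤ)
    have hs2 := rk_succ_x X0 t (i : ℤ)
    have hd := dform_step X0 t i (hnf i)
    rw [hs1, hs2, ih, hd]; ring
  | pred i ih =>
    have hs1 := rk_succ_x X0 (t + 1) (-(i : ℤ) - 1)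
    have hs2 := rk_succ_x X0 t (-(i : ℤ) - 1)
    have hd := dform_step X0 t (-(i : ℤ) - 1) (hnf _)
    rw [show -(i : ℤ) - 1 + 1 = -(i : ℤ) from by ring] at hs1 hs2 hd
    linarith

lemma rk_right (t : ℕ) (x : ℤ) :
    rk 3 X0 t (x + 1) = rk 3 X0 t x - D (traj 3 X0 t x) (traj 3 X0 t (x + 1)) := by
  rw [rk_succ_x, dform_eq]

lemma rk_left (t : ℕ) (x : ℤ) :
    rk 3 X0 t (x - 1) = rk 3 X0 t x + D (traj 3 X0 t (x - 1)) (traj 3 X0 t x) := by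
  have h := rk_right X0 t (x - 1)
  rw [show x - 1 + 1 = x from by ring] at h
  linarith


/-! ### Three-step excitation count -/

lemma E3app (t : ℕ) (x : ℤ) (hfl : ¬ flips 3 X0 t (x - 1)) (hfr : ¬ flips 3 X0 t x) :
    Ei X0 t x + Ei X0 (t + 1) x + Ei X0 (t + 2) x =
      if (traj 3 X0 t (x - 1) = traj 3 X0 t x + 2 ∨ traj 3 X0 t (x + 1) = traj 3 X0 t x + 2)
      then 1 else 0 := by
  set l := traj 3 X0 t (x - 1) with hl
  set a := traj 3 X0 t x with ha
  set r := traj 3 X0 t (x + 1) with hr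
  set eL0 := CB (traj 3 X0 t (x - 2)) l a with heL0
  set eR0 := CB a r (traj 3 X0 t (x + 2)) with heR0
  have hL1 : traj 3 X0 (t + 1) (x - 1) = nxtB eL0 l := by
    have h := traj_succ X0 t (x - 1)
    rwa [show x - 1 - 1 = x - 2 from by ring, show x - 1 + 1 = x from by ring] at h
  have hA1 : traj 3 X0 (t + 1) x = nxtB (CB l a r) a := traj_succ X0 t x
  have hR1 : traj 3 X0 (t + 1) (x + 1) = nxtB eR0 r := by
    have h := traj_succ X0 t (x + 1)
    rwa [show x + 1 - 1 = x from by ring, show x + 1 + 1 = x + 2 from by ring] at h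
  set eL1 := CB (traj 3 X0 (t + 1) (x - 2)) (nxtB eL0 l) (nxtB (CB l a r) a) with heL1
  set eR1 := CB (nxtB (CB l a r) a) (nxtB eR0 r) (traj 3 X0 (t + 1) (x + 2)) with heR1
  have hL2 : traj 3 X0 (t + 2) (x - 1) = nxtB eL1 (nxtB eL0 l) := by
    have h := traj_succ X0 (t + 1) (x - 1)
    rw [show x - 1 - 1 = x - 2 from by ring, show x - 1 + 1 = x from by ring,
      hL1, hA1] at h
    rwa [show t + 1 + 1 = t + 2 from rfl] at h
  have hA2 : traj 3 X0 (t + 2) x =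
      nxtB (CB (nxtB eL0 l) (nxtB (CB l a r) a) (nxtB eR0 r)) (nxtB (CB l a r) a) := by
    have h := traj_succ X0 (t + 1) x
    rw [hL1, hA1, hR1] at h
    rwa [show t + 1 + 1 = t + 2 from rfl] at h
  have hR2 : traj 3 X0 (t + 2) (x + 1) = nxtB eR1 (nxtB eR0 r) := by
    have h := traj_succ X0 (t + 1) (x + 1)
    rw [show x + 1 - 1 = x from by ring, show x + 1 + 1 = x + 2 from by ring,
      hA1, hR1] at h
    rwa [show t + 1 + 1 = t + 2 from rfl] at h
  have hf1 : ¬ flipP (D l a) (D (nxtB eL0 l) (nxtB (CB l a r) a)) := by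
    rw [flips_iff, show x - 1 + 1 = x from by ring, hL1, hA1] at hfl
    exact hfl
  have hf2 : ¬ flipP (D a r) (D (nxtB (CB l a r) a) (nxtB eR0 r)) := by
    rw [flips_iff, hA1, hR1] at hfr
    exact hfr
  have key := keyE3 l a r eL0 eR0 eL1 eR1
    (CB_val _ _ _) (fun h1 h2 => CB_right _ _ _ h1 h2)
    (CB_val _ _ _) (fun h1 h2 => CB_left _ _ _ h1 h2)
    (CB_val _ _ _) (fun h1 h2 => CB_right _ _ _ h1 h2)
    (CB_val _ _ _) (fun h1 h2 => CB_left _ _ _ h1 h2)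
    hf1 hf2
  have e1 : Ei X0 t x = (if CB l a r then (1 : ℤ) else 0) := rfl
  have e2 : Ei X0 (t + 1) x =
      (if CB (nxtB eL0 l) (nxtB (CB l a r) a) (nxtB eR0 r) then (1 : ℤ) else 0) := by
    unfold Ei
    rw [hL1, hA1, hR1]
  have e3 : Ei X0 (t + 2) x =
      (if CB (nxtB eL1 (nxtB eL0 l))
          (nxtB (CB (nxtB eL0 l) (nxtB (CB l a r) a) (nxtB eR0 r)) (nxtB (CB l a r) a))
          (nxtB eR1 (nxtB eR0 r)) then (1 : ℤ) else 0) := by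
    unfold Ei
    rw [hL2, hA2, hR2]
  rw [e1, e2, e3, key]

/-! ### Rank dynamics -/

variable (t₀ : ℕ)

lemma rk_three (hnoflip : ∀ t : ℕ, t₀ ≤ t → ∀ x : ℤ, ¬ flips 3 X0 t x) (t : ℕ) (ht : t₀ ≤ t) (x : ℤ) :
    rk 3 X0 (t + 3) x = rk 3 X0 t x +
      (if (traj 3 X0 t (x - 1) = traj 3 X0 t x + 2 ∨ traj 3 X0 t (x + 1) = traj 3 X0 t x + 2)
      then 1 else 0) := by
  have e1 := rk_succ X0 t (hnoflip t ht) x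
  have e2 := rk_succ X0 (t + 1) (hnoflip (t + 1) (by omega)) x
  have e3 := rk_succ X0 (t + 2) (hnoflip (t + 2) (by omega)) x
  have e4 := E3app X0 t x (hnoflip t ht (x - 1)) (hnoflip t ht x)
  rw [show t + 1 + 1 = t + 2 from rfl] at e2
  rw [show t + 2 + 1 = t + 3 from rfl] at e3
  rw [e3, e2, e1]
  linarith

lemma step3_ge (hnoflip : ∀ t : ℕ, t₀ ≤ t → ∀ x : ℤ, ¬ flips 3 X0 t x) (t : ℕ) (ht : t₀ ≤ t) (x : ℤ) :
    rk 3 X0 t (x - 1) ≤ rk 3 X0 (t + 3) x ∧ rk 3 X0 t x ≤ rk 3 X0 (t + 3) x ∧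
      rk 3 X0 t (x + 1) ≤ rk 3 X0 (t + 3) x := by
  have h3 := rk_three X0 t₀ hnoflip t ht x
  have hL := rk_left X0 t x
  have hR := rk_right X0 t x
  have hDL := D_cases (traj 3 X0 t (x - 1)) (traj 3 X0 t x)
  have hDR := D_cases (traj 3 X0 t x) (traj 3 X0 t (x + 1))
  by_cases hc : (traj 3 X0 t (x - 1) = traj 3 X0 t x + 2 ∨
      traj 3 X0 t (x + 1) = traj 3 X0 t x + 2)
  · rw [if_pos hc] at h3
    refine ⟨?_, by omega, ?_⟩
    · have : D (traj 3 X0 t (x - 1)) (traj 3 X0 t x) ≤ 1 := by rcases hDL with h | h | h <;> omega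
      omega
    · have : -1 ≤ D (traj 3 X0 t x) (traj 3 X0 t (x + 1)) := by
        rcases hDR with h | h | h <;> omega
      omega
  · rw [if_neg hc] at h3
    push_neg at hc
    have h1 : D (traj 3 X0 t (x - 1)) (traj 3 X0 t x) ≠ 1 :=
      fun h => hc.1 ((ahead_left _ _).mpr h)
    have h2 : D (traj 3 X0 t x) (traj 3 X0 t (x + 1)) ≠ -1 :=
      fun h => hc.2 ((ahead_right _ _).mpr h)
    have h1' : D (traj 3 X0 t (x - 1)) (traj 3 X0 t x) ≤ 0 := by
      rcases hDL with h | h | h <;> omega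
    have h2' : 0 ≤ D (traj 3 X0 t x) (traj 3 X0 t (x + 1)) := by
      rcases hDR with h | h | h <;> omega
    exact ⟨by omega, by omega, by omega⟩

lemma step3_le (hnoflip : ∀ t : ℕ, t₀ ≤ t → ∀ x : ℤ, ¬ flips 3 X0 t x) (t : ℕ) (ht : t₀ ≤ t) (x : ℤ) :
    ∃ y : ℤ, |y - x| ≤ 1 ∧ rk 3 X0 (t + 3) x ≤ rk 3 X0 t y := by
  have h3 := rk_three X0 t₀ hnoflip t ht x
  by_cases hc : (traj 3 X0 t (x - 1) = traj 3 X0 t x + 2 ∨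
      traj 3 X0 t (x + 1) = traj 3 X0 t x + 2)
  · rw [if_pos hc] at h3
    rcases hc with h | h
    · refine ⟨x - 1, by rw [abs_le]; omega, ?_⟩
      have hL := rk_left X0 t x
      have hD := (ahead_left _ _).mp h
      omega
    · refine ⟨x + 1, by rw [abs_le]; omega, ?_⟩
      have hR := rk_right X0 t x
      have hD := (ahead_right _ _).mp h
      omega
  · rw [if_neg hc] at h3
    exact ⟨x, by simp, by omega⟩

lemma up (hnoflip : ∀ t : ℕ, t₀ ≤ t → ∀ x : ℤ, ¬ flips 3 X0 t x) : ∀ n : ℕ, ∀ x y : ℤ, |y - x| ≤ (n : ℤ) → rk 3 X0 t₀ y ≤ rk 3 X0 (t₀ + 3 * n) x := by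
  intro n
  induction n with
  | zero =>
    intro x y h
    rw [abs_le] at h
    have : y = x := by omega
    subst this
    simp
  | succ n ih =>
    intro x y h
    rw [abs_le] at h
    have h3 := step3_ge X0 t₀ hnoflip (t₀ + 3 * n) (by omega) x
    have hco : t₀ + 3 * (n + 1) = t₀ + 3 * n + 3 := by ring
    rw [hco]
    push_cast at h
    rcases lt_trichotomy y x with hlt | heq | hgt
    · exact le_trans (ih (x - 1) y (by rw [abs_le]; push_cast; omega)) h3.1
    · subst heq
      exact le_trans (ih y y (by simp)) h3.2.1
    · exact le_trans (ih (x + 1) y (by rw [abs_le]; push_cast; omega)) h3.2.2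

lemma down (hnoflip : ∀ t : ℕ, t₀ ≤ t → ∀ x : ℤ, ¬ flips 3 X0 t x) : ∀ n : ℕ, ∀ x : ℤ, ∃ y : ℤ, |y - x| ≤ (n : ℤ) ∧
    rk 3 X0 (t₀ + 3 * n) x ≤ rk 3 X0 t₀ y := by
  intro n
  induction n with
  | zero => intro x; exact ⟨x, by simp, by simp⟩
  | succ n ih =>
    intro x
    obtain ⟨y', hy'1, hy'2⟩ := step3_le X0 t₀ hnoflip (t₀ + 3 * n) (by omega) x
    obtain ⟨y, hy1, hy2⟩ := ih y'
    refine ⟨y, ?_, ?_⟩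
    · rw [abs_le] at *
      push_cast
      push_cast at hy1
      omega
    · have hco : t₀ + 3 * (n + 1) = t₀ + 3 * n + 3 := by ring
      rw [hco]
      exact le_trans hy'2 hy2


end FCA3P


/-- For the 3-color FCA on ℤ, if no edge flips at any time `t ≥ t₀`,
then for every integer `t ≥ 1`: `M_{t₀}(t-1) ≤ ne_{3t+t₀}(0) ≤ M_{t₀}(t)`. -/
theorem fca3_rank_vs_excitations (X0 : ℤ → ZMod 3) (t₀ : ℕ)
    (hnoflip : ∀ t : ℕ, t₀ ≤ t → ∀ x : ℤ, ¬ flips 3 X0 t x) :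
    ∀ t : ℕ, 1 ≤ t →
      maxRk 3 X0 t₀ ((t : ℝ) - 1) ≤ (ne' 3 X0 (3 * t + t₀) 0 : ℤ) ∧
        (ne' 3 X0 (3 * t + t₀) 0 : ℤ) ≤ maxRk 3 X0 t₀ (t : ℝ) := by
  intro t ht
  have hV : (ne' 3 X0 (3 * t + t₀) 0 : ℤ) = rk 3 X0 (t₀ + 3 * t) 0 := by
    rw [show 3 * t + t₀ = t₀ + 3 * t from by omega, FCA3P.rk_zero]
  constructor
  · unfold maxRk
    apply csSup_le
    · refine ⟨rk 3 X0 t₀ 0, 0, ?_, rfl⟩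
      have h1 : (1 : ℝ) ≤ (t : ℝ) := by exact_mod_cast ht
      simp only [Set.mem_setOf_eq, Int.cast_zero, abs_zero]
      linarith
    · rintro z ⟨y, hy, rfl⟩
      simp only [Set.mem_setOf_eq] at hy
      have hy' : |y| ≤ (t : ℤ) := by
        have h1 : ((|y| : ℤ) : ℝ) ≤ (t : ℝ) - 1 := by rw [Int.cast_abs]; exact hy
        have h2 : ((|y| : ℤ) : ℝ) ≤ ((t : ℤ) : ℝ) := by push_cast at h1 ⊢; linarith
        exact_mod_cast h2
      rw [hV]
      exact FCA3P.up X0 t₀ hnoflip t 0 y (by simpa using hy')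
  · obtain ⟨y, hy1, hy2⟩ := FCA3P.down X0 t₀ hnoflip t 0
    rw [hV]
    have hmem : rk 3 X0 t₀ y ∈ rk 3 X0 t₀ '' {x : ℤ | |(x : ℝ)| ≤ (t : ℝ)} := by
      refine ⟨y, ?_, rfl⟩
      have h1 : |y| ≤ (t : ℤ) := by simpa using hy1
      simp only [Set.mem_setOf_eq]
      rw [← Int.cast_abs]
      exact_mod_cast h1
    have hbdd : BddAbove (rk 3 X0 t₀ '' {x : ℤ | |(x : ℝ)| ≤ (t : ℝ)}) := by
      refine BddAbove.mono (Set.image_mono ?_)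
        (((Set.finite_Icc (-(t : ℤ)) (t : ℤ)).image _).bddAbove)
      intro z hz
      simp only [Set.mem_setOf_eq] at hz
      have h1 : |z| ≤ (t : ℤ) := by
        rw [← Int.cast_abs] at hz
        exact_mod_cast hz
      simp only [Set.mem_Icc]
      rw [abs_le] at h1
      omega
    exact le_trans hy2 (le_csSup hbdd hmem)
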